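/- Let n ≥ 1 and let f(x) = Σ_{i=1}^n a_i x_i be a C-linear form on C^n, and let α ∈ C be nonzero. Suppose f(v)^n = α for every vector v ∈ C^n whose coordinates are a permutation of the n distinct n-th roots of unity. Then there exists an index i such that f lies in the two-dimensional space C·x_i + C·(x_1+...+x_n); equivalently, at least n−1 of the coefficients a_1,...,a_n are equal. -/

import Mathlib

open MvPolynomial Finset

/-- The set of the first `j` variables among `x_0, ..., x_{n-1}`. -/
def fv (n j : ℕ) : Finset (Fin n) := Finset.univ.filter (fun i => (i : ℕ) < j)

/-- Complete homogeneous symmetric polynomial of degree `m` in the variables indexed by `S`. -/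
noncomputable def hh (R : Type*) [CommRing R] (n m : ℕ) (S : Finset (Fin n)) :
    MvPolynomial (Fin n) R :=
  ∑ s ∈ S.sym m, ((s : Multiset (Fin n)).map (X : Fin n → MvPolynomial (Fin n) R)).prod

/-- Elementary symmetric polynomial of degree `m` in the variables indexed by `S`. -/
noncomputable def ee (R : Type*) [CommRing R] (n m : ℕ) (S : Finset (Fin n)) :
    MvPolynomial (Fin n) R :=
  ∑ s ∈ S.powersetCard m, ∏ i ∈ s, X i

namespace Stmt8Aux

open Complex Real

noncomputable def Complex.abs : AbsoluteValue ℂ ℝ where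
  toFun z := ‖z‖
  map_mul' := norm_mul
  nonneg' := norm_nonneg
  eq_zero' _ := norm_eq_zero
  add_le' := norm_add_le

lemma Complex.sq_abs (z : ℂ) : Complex.abs z ^ 2 = Complex.normSq z := Complex.sq_norm z

lemma Complex.norm_eq_abs (z : ℂ) : ‖z‖ = Complex.abs z := rfl

lemma exists_perm {n : ℕ} (k : ℕ) : ∀ (f g : Fin k → Fin n), Function.Injective f →
    Function.Injective g → ∃ σ : Equiv.Perm (Fin n), ∀ x, σ (f x) = g x := by
  induction k with
  | zero => exact fun f g _ _ => ⟨1, fun x => x.elim0⟩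
  | succ m ih =>
    intro f g hf hg
    obtain ⟨σ, hσ⟩ := ih (f ∘ Fin.succ) (g ∘ Fin.succ)
      (hf.comp (Fin.succ_injective m)) (hg.comp (Fin.succ_injective m))
    refine ⟨Equiv.swap (σ (f 0)) (g 0) * σ, fun x => ?_⟩
    induction x using Fin.cases with
    | zero => simp [Equiv.Perm.mul_apply]
    | succ y =>
      have h1 : σ (f y.succ) = g y.succ := hσ y
      have h2 : g y.succ ≠ σ (f 0) := by
        rw [← h1]; intro hcon
        exact (Fin.succ_ne_zero y) (hf (σ.injective hcon))
      have h3 : g y.succ ≠ g 0 := fun hc => (Fin.succ_ne_zero y) (hg hc)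
      rw [Equiv.Perm.mul_apply, h1, Equiv.swap_apply_of_ne_of_ne h2 h3]

lemma inj2 {α : Type*} {x y : α} (h : x ≠ y) : Function.Injective ![x, y] := by
  intro s t hst; fin_cases s <;> fin_cases t <;> simp_all

lemma inj3 {α : Type*} {x y z : α} (h1 : x ≠ y) (h2 : x ≠ z) (h3 : y ≠ z) :
    Function.Injective ![x, y, z] := by
  intro s t hst; fin_cases s <;> fin_cases t <;> simp_all

lemma inj4 {α : Type*} {x y z w : α} (h1 : x ≠ y) (h2 : x ≠ z) (h3 : x ≠ w)
    (h4 : y ≠ z) (h5 : y ≠ w) (h6 : z ≠ w) : Function.Injective ![x, y, z, w] := by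
  intro s t hst; fin_cases s <;> fin_cases t <;> simp_all

lemma sum_diff {n : ℕ} (a : Fin n → ℂ) (ζ : ℂ) (σ c : Equiv.Perm (Fin n)) (t : Finset (Fin n))
    (ht : ∀ m, m ∉ t → c m = m) :
    (∑ i, a i * ζ ^ (((σ * c) i : ℕ))) - ∑ i, a i * ζ ^ ((σ i : ℕ)) =
      ∑ m ∈ t, a m * (ζ ^ ((σ (c m) : ℕ)) - ζ ^ ((σ m : ℕ))) := by
  simp only [Equiv.Perm.mul_apply]
  rw [← Finset.sum_sub_distrib]
  rw [show (∑ i, (a i * ζ ^ ((σ (c i) : ℕ)) - a i * ζ ^ ((σ i : ℕ))))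
      = ∑ i, a i * (ζ ^ ((σ (c i) : ℕ)) - ζ ^ ((σ i : ℕ))) from
    Finset.sum_congr rfl (fun x _ => by ring)]
  exact (Finset.sum_subset (Finset.subset_univ t) (fun x _ hx => by rw [ht x hx]; ring)).symm

lemma three_le {n : ℕ} {i j k : Fin n} (h1 : i ≠ j) (h2 : i ≠ k) (h3 : j ≠ k) : 3 ≤ n := by
  have h : ({i, j, k} : Finset (Fin n)).card ≤ n := by
    simpa using Finset.card_le_univ ({i, j, k} : Finset (Fin n))
  rwa [Finset.card_insert_of_notMem (by simp [h1, h2]),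
    Finset.card_insert_of_notMem (by simp [h3]), Finset.card_singleton] at h

lemma four_le {n : ℕ} {i j k l : Fin n} (h1 : i ≠ j) (h2 : i ≠ k) (h3 : i ≠ l)
    (h4 : j ≠ k) (h5 : j ≠ l) (h6 : k ≠ l) : 4 ≤ n := by
  have h : ({i, j, k, l} : Finset (Fin n)).card ≤ n := by
    simpa using Finset.card_le_univ ({i, j, k, l} : Finset (Fin n))
  rwa [Finset.card_insert_of_notMem (by simp [h1, h2, h3]),
    Finset.card_insert_of_notMem (by simp [h4, h5]),
    Finset.card_insert_of_notMem (by simp [h6]), Finset.card_singleton] at h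

lemma normSq_expI_sub_one (θ : ℝ) :
    Complex.normSq (Complex.exp (θ * Complex.I) - 1) = 2 - 2 * Real.cos θ := by
  rw [Complex.normSq_apply]
  simp only [Complex.sub_re, Complex.sub_im, Complex.exp_ofReal_mul_I_re,
    Complex.exp_ofReal_mul_I_im, Complex.one_re, Complex.one_im]
  nlinarith [Real.sin_sq_add_cos_sq θ]

lemma normSq_expI (θ : ℝ) : Complex.normSq (Complex.exp (θ * Complex.I)) = 1 := by
  rw [Complex.normSq_apply]
  simp only [Complex.exp_ofReal_mul_I_re, Complex.exp_ofReal_mul_I_im]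
  nlinarith [Real.sin_sq_add_cos_sq θ]

lemma normSq_one_add {z : ℂ} (hz : Complex.normSq z = 1) :
    Complex.normSq (1 + z) = 2 + 2 * z.re := by
  rw [Complex.normSq_apply] at hz ⊢
  simp only [Complex.add_re, Complex.add_im, Complex.one_re, Complex.one_im]
  nlinarith

lemma expI_ne_one {x : ℝ} (h0 : 0 < x) (h2 : x < 2 * π) :
    Complex.exp ((x : ℝ) * Complex.I) ≠ 1 := by
  intro hc
  have hcos : Real.cos x = 1 := by
    rw [← Complex.exp_ofReal_mul_I_re, hc, Complex.one_re]
  rw [Real.cos_eq_one_iff_of_lt_of_lt (by linarith) h2] at hcos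
  exact absurd hcos (ne_of_gt h0)

lemma expI_ne {x y : ℝ} (hlt : x < y) (h2 : y - x < 2 * π) :
    Complex.exp ((x : ℝ) * Complex.I) ≠ Complex.exp ((y : ℝ) * Complex.I) := by
  intro hc
  apply expI_ne_one (sub_pos.mpr hlt) h2
  rw [show ((y - x : ℝ) : ℂ) * Complex.I = (y : ℝ) * Complex.I - (x : ℝ) * Complex.I by
    push_cast; ring, Complex.exp_sub, ← hc, div_self (Complex.exp_ne_zero _)]

lemma f_pow_n {n : ℕ} (hn : 0 < n) (m : ℕ) :
    Complex.exp ((2*π*m/n : ℝ) * Complex.I) ^ n = 1 := by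
  have hn0 : (0:ℝ) < n := by exact_mod_cast hn
  have hr : (2*π*(m:ℝ)/n) * n = (m:ℝ) * (2*π) := by field_simp
  rw [← Complex.exp_nat_mul]
  have hc : (n:ℂ) * (((2*π*m/n : ℝ):ℂ) * Complex.I) = ((m:ℤ):ℂ) * (2*π*Complex.I) := by
    have h2 := congrArg (fun x : ℝ => (x:ℂ)) hr
    push_cast at h2 ⊢
    linear_combination Complex.I * h2
  rw [hc, Complex.exp_int_mul_two_pi_mul_I]

lemma f_ne {n : ℕ} (hn : 0 < n) {m1 m2 : ℕ} (hlt : m1 < m2) (hdiff : m2 - m1 < n) :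
    Complex.exp ((2*π*m1/n : ℝ) * Complex.I) ≠ Complex.exp ((2*π*m2/n : ℝ) * Complex.I) := by
  have hn0 : (0:ℝ) < n := by exact_mod_cast hn
  have hpi := Real.pi_pos
  have hm : (m1:ℝ) < m2 := by exact_mod_cast hlt
  have hdr : (m2:ℝ) - m1 < n := by
    have h' : ((m2 - m1 : ℕ):ℝ) < n := by exact_mod_cast hdiff
    rwa [Nat.cast_sub hlt.le] at h'
  apply expI_ne
  · gcongr
  · rw [div_sub_div_same, div_lt_iff₀ hn0]
    nlinarith

lemma sin_gt_half {x : ℝ} (h1 : π/6 < x) (h2 : x < 5*π/6) : 1/2 < Real.sin x := by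
  have hpi := Real.pi_pos
  have key : ∀ y : ℝ, π/6 < y → y ≤ π/2 → 1/2 < Real.sin y := by
    intro y hy1 hy2
    have := Real.strictMonoOn_sin (a := π/6) (b := y)
      ⟨by linarith, by linarith⟩ ⟨by linarith, hy2⟩ hy1
    rwa [Real.sin_pi_div_six] at this
  rcases le_or_gt x (π/2) with hx | hx
  · exact key x h1 hx
  · rw [← Real.sin_pi_sub]
    exact key _ (by linarith) (by linarith)

set_option maxHeartbeats 1000000 in
lemma step2 {n : ℕ} (hn : 2 ≤ n) (a : Fin n → ℂ) (ζ : ℂ) (hζ : IsPrimitiveRoot ζ n)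
    (α : ℂ) (hα : α ≠ 0)
    (h : ∀ σ : Equiv.Perm (Fin n), (∑ i, a i * ζ ^ (σ i : ℕ)) ^ n = α)
    (r : ℝ)
    (habs : ∀ σ : Equiv.Perm (Fin n), Complex.abs (∑ i, a i * ζ ^ (σ i : ℕ)) = r)
    {i j : Fin n} (hv : a i ≠ a j) : Complex.abs (a i - a j) = r := by
  haveI : NeZero n := ⟨by omega⟩
  have hS0 : ∀ σ : Equiv.Perm (Fin n), (∑ i, a i * ζ ^ (σ i : ℕ)) ≠ 0 := by
    intro σ hz
    exact hα (by rw [← h σ, hz, zero_pow (by omega : n ≠ 0)])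
  have hij : i ≠ j := fun hc => hv (by rw [hc])
  have hrpos : 0 < r := by
    rcases lt_or_eq_of_le (AbsoluteValue.nonneg Complex.abs
      (∑ i, a i * ζ ^ (((1 : Equiv.Perm (Fin n)) i : ℕ)))) with hlt | heq
    · rwa [habs 1] at hlt
    · exact absurd ((map_eq_zero _).mp heq.symm) (hS0 1)
  have hζd : ∀ d : Fin n, d ≠ 0 → ζ ^ (d : ℕ) ≠ 1 := by
    intro d hd hone
    have hdvd := (hζ.pow_eq_one_iff_dvd (d : ℕ)).mp hone
    have hz : (d : ℕ) = 0 := Nat.eq_zero_of_dvd_of_lt hdvd d.isLt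
    exact hd (Fin.ext (by simp [hz]))
  -- the chord set
  set Cs : Finset ℝ := ((Finset.univ : Finset (Fin n)).erase 0).image
      (fun d : Fin n => Complex.abs (ζ ^ (d : ℕ) - 1)) with hCs
  have hCpos : ∀ c ∈ Cs, 0 < c := by
    intro c hc
    obtain ⟨d, hd, rfl⟩ := Finset.mem_image.mp hc
    have hdne := (Finset.mem_erase.mp hd).1
    have : ζ ^ (d : ℕ) - 1 ≠ 0 := sub_ne_zero.mpr (hζd d hdne)
    exact (AbsoluteValue.pos Complex.abs this)
  have hCne : Cs.Nonempty := by
    refine ⟨Complex.abs (ζ ^ ((⟨1, by omega⟩ : Fin n) : ℕ) - 1), Finset.mem_image.mpr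
      ⟨⟨1, by omega⟩, Finset.mem_erase.mpr ⟨?_, Finset.mem_univ _⟩, rfl⟩⟩
    intro hc
    rw [Fin.ext_iff] at hc
    simp at hc
  -- the key step
  have key : ∀ d : Fin n, d ≠ 0 →
      ∃ c' ∈ Cs, Complex.abs (a i - a j) * Complex.abs (ζ ^ (d : ℕ) - 1) = r * c' := by
    intro d hd
    obtain ⟨σ, hσ⟩ := exists_perm 2 ![i, j] ![d, 0] (inj2 hij) (inj2 hd)
    have hσi : σ i = d := by simpa using hσ 0
    have hσj : σ j = 0 := by simpa using hσ 1
    have hfix : ∀ m, m ∉ ({i, j} : Finset (Fin n)) → Equiv.swap i j m = m := by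
      intro m hm
      simp only [Finset.mem_insert, Finset.mem_singleton, not_or] at hm
      exact Equiv.swap_apply_of_ne_of_ne hm.1 hm.2
    have hD := sum_diff a ζ σ (Equiv.swap i j) {i, j} hfix
    rw [Finset.sum_pair hij, Equiv.swap_apply_left, Equiv.swap_apply_right, hσi, hσj] at hD
    have hD2 : (∑ m, a m * ζ ^ (((σ * Equiv.swap i j) m : ℕ))) - (∑ m, a m * ζ ^ ((σ m : ℕ)))
        = (a j - a i) * (ζ ^ (d : ℕ) - 1) := by
      rw [hD]; simp only [Fin.val_zero, pow_zero]; ring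
    set ω : ℂ := (∑ m, a m * ζ ^ (((σ * Equiv.swap i j) m : ℕ))) / (∑ m, a m * ζ ^ ((σ m : ℕ)))
      with hωdef
    have hω1 : ω ^ n = 1 := by rw [hωdef, div_pow, h, h, div_self hα]
    have hω2 : (∑ m, a m * ζ ^ (((σ * Equiv.swap i j) m : ℕ))) - (∑ m, a m * ζ ^ ((σ m : ℕ)))
        = (∑ m, a m * ζ ^ ((σ m : ℕ))) * (ω - 1) := by
      rw [hωdef]; field_simp [hS0 σ]
    have hωne : ω ≠ 1 := by
      intro hc
      rw [hc, sub_self, mul_zero, hD2] at hω2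
      rcases mul_eq_zero.mp hω2 with h' | h'
      · exact hv (by linear_combination -h')
      · exact (sub_ne_zero.mpr (hζd d hd)) h'
    obtain ⟨e, he, hepow⟩ := hζ.eq_pow_of_pow_eq_one hω1
    have heF : (⟨e, he⟩ : Fin n) ≠ 0 := by
      intro hc
      apply hωne
      rw [← hepow]
      rw [Fin.ext_iff] at hc
      simp only [Fin.val_zero] at hc
      simp [hc]
    refine ⟨Complex.abs (ζ ^ e - 1), Finset.mem_image.mpr
      ⟨⟨e, he⟩, Finset.mem_erase.mpr ⟨heF, Finset.mem_univ _⟩, rfl⟩, ?_⟩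
    have habseq := congrArg Complex.abs (hD2.symm.trans hω2)
    rw [map_mul, map_mul, habs σ, ← hepow] at habseq
    rw [AbsoluteValue.map_sub]
    exact habseq
  -- compare with the minimum and maximum of the chord set
  have hminmem := Cs.min'_mem hCne
  have hmaxmem := Cs.max'_mem hCne
  obtain ⟨dmin, hdmin, hdminv⟩ := Finset.mem_image.mp hminmem
  obtain ⟨dmax, hdmax, hdmaxv⟩ := Finset.mem_image.mp hmaxmem
  obtain ⟨c1, hc1m, hc1⟩ := key dmin (Finset.mem_erase.mp hdmin).1
  obtain ⟨c2, hc2m, hc2⟩ := key dmax (Finset.mem_erase.mp hdmax).1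
  rw [hdminv] at hc1
  rw [hdmaxv] at hc2
  have hminpos : 0 < Cs.min' hCne := hCpos _ hminmem
  have hmaxpos : 0 < Cs.max' hCne := hCpos _ hmaxmem
  have hge : r ≤ Complex.abs (a i - a j) := by
    have h1 : r * Cs.min' hCne ≤ Complex.abs (a i - a j) * Cs.min' hCne := by
      rw [hc1]
      exact mul_le_mul_of_nonneg_left (Cs.min'_le _ hc1m) (le_of_lt hrpos)
    exact le_of_mul_le_mul_right h1 hminpos
  have hle : Complex.abs (a i - a j) ≤ r := by
    have h2 : Complex.abs (a i - a j) * Cs.max' hCne ≤ r * Cs.max' hCne := by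
      rw [hc2]
      exact mul_le_mul_of_nonneg_left (Cs.le_max' _ hc2m) (le_of_lt hrpos)
    exact le_of_mul_le_mul_right h2 hmaxpos
  exact le_antisymm hle hge

set_option maxHeartbeats 1000000 in
lemma case1 {n : ℕ} (a : Fin n → ℂ) (ζ : ℂ) (hζ : IsPrimitiveRoot ζ n)
    (r : ℝ) (hrpos : 0 < r)
    (habs : ∀ σ : Equiv.Perm (Fin n), Complex.abs (∑ m, a m * ζ ^ (σ m : ℕ)) = r)
    (hr2 : ∀ p q : Fin n, a p ≠ a q → Complex.abs (a p - a q) = r)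
    {i j k : Fin n} (hij : i ≠ j) (hik : i ≠ k) (hjk : j ≠ k)
    (vij : a i ≠ a j) (vik : a i ≠ a k) (vjk : a j ≠ a k) : False := by
  have hn3 : 3 ≤ n := three_le hij hik hjk
  haveI : NeZero n := ⟨by omega⟩
  have hpi := Real.pi_pos
  set u : ℂ := a i - a k with hu
  set v : ℂ := a j - a k with hv
  have hu0 : u ≠ 0 := sub_ne_zero.mpr vik
  have hau : Complex.abs u = r := hr2 _ _ vik
  have hav : Complex.abs v = r := hr2 _ _ vjk
  have hauv : Complex.abs (u - v) = r := by
    rw [show u - v = a i - a j by rw [hu, hv]; ring]; exact hr2 _ _ vij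
  set w : ℂ := v / u with hw
  have hwu : w * u = v := div_mul_cancel₀ v hu0
  have hnw : Complex.normSq w = 1 := by
    have habsw : Complex.abs w = 1 := by
      rw [hw, map_div₀, hau, hav, div_self (ne_of_gt hrpos)]
    rw [← Complex.sq_abs, habsw]; norm_num
  have hnw1 : Complex.normSq (1 - w) = 1 := by
    have habsw1 : Complex.abs (1 - w) = 1 := by
      have h1w : (1 : ℂ) - w = (u - v)/u := by rw [hw]; field_simp
      rw [h1w, map_div₀, hauv, hau, div_self (ne_of_gt hrpos)]
    rw [← Complex.sq_abs, habsw1]; norm_num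
  have hwre : w.re = 1/2 := by
    rw [Complex.normSq_apply] at hnw
    rw [Complex.normSq_apply] at hnw1
    simp only [Complex.sub_re, Complex.sub_im, Complex.one_re, Complex.one_im] at hnw1
    nlinarith
  have hwim : w.im ^ 2 = 3 / 4 := by
    rw [Complex.normSq_apply] at hnw; nlinarith
  -- choice of the angle
  obtain ⟨d, hd1, hd2⟩ : ∃ d : ℕ, n < 6 * d ∧ 2 * d < n := ⟨n / 6 + 1, by omega, by omega⟩
  set ψ : ℝ := 2 * π * d / n with hψ
  have hn0 : (0:ℝ) < n := by
    have : (3:ℝ) ≤ n := by exact_mod_cast hn3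
    linarith
  have hcast1 : (n:ℝ) < 6 * d := by exact_mod_cast hd1
  have hcast2 : (2 * d : ℝ) < n := by exact_mod_cast hd2
  have hψ1 : π / 3 < ψ := by
    rw [hψ, div_lt_div_iff₀ (by norm_num) hn0]
    nlinarith [mul_pos hpi (sub_pos.mpr hcast1)]
  have hψ2 : ψ < π := by
    rw [hψ, div_lt_iff₀ hn0]
    nlinarith [mul_pos hpi (sub_pos.mpr hcast2)]
  have hψ0 : 0 < ψ := by linarith
  -- sign choice
  have him : w.im = Real.sqrt 3 / 2 ∨ w.im = -(Real.sqrt 3 / 2) := by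
    have h3 : (Real.sqrt 3) ^ 2 = 3 := Real.sq_sqrt (by norm_num)
    have hfac : (w.im - Real.sqrt 3 / 2) * (w.im + Real.sqrt 3 / 2) = 0 := by nlinarith
    rcases mul_eq_zero.mp hfac with h' | h'
    · left; linarith
    · right; linarith
  obtain ⟨θ, hθcos, hθ2cos, hθsin, hθpow⟩ :
      ∃ θ : ℝ, Real.cos θ = Real.cos ψ ∧ Real.cos (2*θ) = Real.cos (2*ψ) ∧
        (-(w.im * Real.sin θ) = Real.sqrt 3 / 2 * Real.sin ψ) ∧
        Complex.exp ((θ:ℝ) * Complex.I) ^ n = 1 := by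
    have hpow : ∀ s : ℤ, Complex.exp (((s * ψ : ℝ)) * Complex.I) ^ n = 1 := by
      intro s
      have hr : ((s:ℝ) * ψ) * n = ((s * d : ℤ) : ℝ) * (2 * π) := by
        rw [hψ]
        field_simp
        push_cast
        ring
      have hc : ((n:ℂ)) * (((s * ψ : ℝ):ℂ) * Complex.I)
          = ((s * d : ℤ):ℂ) * (2 * (π:ℂ) * Complex.I) := by
        have h2 := congrArg (fun x : ℝ => (x:ℂ)) hr
        push_cast at h2 ⊢
        linear_combination Complex.I * h2
      rw [← Complex.exp_nat_mul, hc, Complex.exp_int_mul_two_pi_mul_I]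
    rcases him with h' | h'
    · refine ⟨-ψ, by rw [Real.cos_neg], by rw [show 2 * -ψ = -(2*ψ) by ring, Real.cos_neg],
        by rw [Real.sin_neg, h']; ring, ?_⟩
      have := hpow (-1); push_cast at this; simpa using this
    · refine ⟨ψ, rfl, rfl, by rw [h']; ring, ?_⟩
      have := hpow 1; push_cast at this; simpa using this
  set ρ : ℂ := Complex.exp ((θ:ℝ) * Complex.I) with hρ
  have hρn : ρ ^ n = 1 := hθpow
  have hcos1 : Real.cos ψ < 1 := by
    have := Real.strictAntiOn_cos (a := 0) (b := ψ)
      ⟨le_refl 0, by linarith⟩ ⟨by linarith, by linarith⟩ hψ0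
    rwa [Real.cos_zero] at this
  have hcos2 : -1 < Real.cos ψ := by
    have := Real.strictAntiOn_cos (a := ψ) (b := π)
      ⟨by linarith, by linarith⟩ ⟨by linarith, le_refl π⟩ hψ2
    rwa [Real.cos_pi] at this
  have hnρ1 : Complex.normSq (ρ - 1) = 2 - 2 * Real.cos ψ := by
    rw [hρ, normSq_expI_sub_one, hθcos]
  have hρ1 : ρ ≠ 1 := by
    intro hc
    rw [hc, sub_self, map_zero] at hnρ1
    linarith
  have hρsq : ρ ^ 2 = Complex.exp (((2*θ : ℝ)) * Complex.I) := by
    rw [hρ, ← Complex.exp_nat_mul]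
    congr 1
    push_cast
    ring
  have hρ2 : ρ ^ 2 ≠ 1 := by
    intro hc
    have hns : Complex.normSq (ρ^2 - 1) = 2 - 2*Real.cos (2*ψ) := by
      rw [hρsq, normSq_expI_sub_one, hθ2cos]
    rw [hc, sub_self, map_zero] at hns
    rw [Real.cos_two_mul] at hns
    nlinarith
  have hρ0 : ρ ≠ 0 := by rw [hρ]; exact Complex.exp_ne_zero _
  have hρρ : ρ ^ 2 ≠ ρ := by
    intro hc
    apply hρ1
    have : ρ * ρ = ρ * 1 := by rw [mul_one, ← sq]; exact hc
    exact mul_left_cancel₀ hρ0 this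
  obtain ⟨e1, he1lt, he1⟩ := hζ.eq_pow_of_pow_eq_one hρn
  obtain ⟨e2, he2lt, he2⟩ := hζ.eq_pow_of_pow_eq_one
    (show (ρ^2)^n = 1 by rw [← pow_mul, mul_comm, pow_mul, hρn, one_pow])
  set F1 : Fin n := ⟨e1, he1lt⟩ with hF1
  set F2 : Fin n := ⟨e2, he2lt⟩ with hF2
  have hF1v : ζ ^ ((F1 : Fin n) : ℕ) = ρ := he1
  have hF2v : ζ ^ ((F2 : Fin n) : ℕ) = ρ ^ 2 := he2
  have h0v : ζ ^ (((0 : Fin n)) : ℕ) = 1 := by rw [Fin.val_zero, pow_zero]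
  have h01 : (0 : Fin n) ≠ F1 := by
    intro hc
    apply hρ1
    have hv0 := congrArg Fin.val hc
    simp only [Fin.val_zero, hF1] at hv0
    rw [← he1, ← hv0, pow_zero]
  have h02 : (0 : Fin n) ≠ F2 := by
    intro hc
    apply hρ2
    have hv0 := congrArg Fin.val hc
    simp only [Fin.val_zero, hF2] at hv0
    rw [← he2, ← hv0, pow_zero]
  have h12 : F1 ≠ F2 := by
    intro hc
    apply hρρ
    have hv0 := congrArg Fin.val hc
    simp only [hF1, hF2] at hv0
    rw [← he2, ← he1, hv0]
  obtain ⟨σ, hσ⟩ := exists_perm 3 ![i, j, k] ![0, F1, F2] (inj3 hij hik hjk) (inj3 h01 h02 h12)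
  have hσi : σ i = 0 := by simpa using hσ 0
  have hσj : σ j = F1 := by simpa using hσ 1
  have hσk : σ k = F2 := by simpa using hσ 2
  set c : Equiv.Perm (Fin n) := Equiv.swap i j * Equiv.swap j k with hcdef
  have hci : c i = j := by
    rw [hcdef, Equiv.Perm.mul_apply, Equiv.swap_apply_of_ne_of_ne hij hik, Equiv.swap_apply_left]
  have hcj : c j = k := by
    rw [hcdef, Equiv.Perm.mul_apply, Equiv.swap_apply_left,
      Equiv.swap_apply_of_ne_of_ne (Ne.symm hik) (Ne.symm hjk)]
  have hck : c k = i := by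
    rw [hcdef, Equiv.Perm.mul_apply, Equiv.swap_apply_right, Equiv.swap_apply_right]
  have hfix : ∀ m, m ∉ ({i, j, k} : Finset (Fin n)) → c m = m := by
    intro m hm
    simp only [Finset.mem_insert, Finset.mem_singleton, not_or] at hm
    rw [hcdef, Equiv.Perm.mul_apply, Equiv.swap_apply_of_ne_of_ne hm.2.1 hm.2.2,
      Equiv.swap_apply_of_ne_of_ne hm.1 hm.2.1]
  have hD := sum_diff a ζ σ c {i, j, k} hfix
  rw [Finset.sum_insert (by simp [hij, hik]), Finset.sum_pair hjk] at hD
  rw [hci, hcj, hck, hσi, hσj, hσk, hF1v, hF2v, h0v] at hD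
  have hD2 : (∑ m, a m * ζ ^ (((σ * c) m : ℕ))) - (∑ m, a m * ζ ^ ((σ m : ℕ)))
      = (ρ - 1) * (u + v * ρ) := by
    rw [hD, hu, hv]; ring
  -- upper bound on the difference
  have hDabs : Complex.abs ((∑ m, a m * ζ ^ (((σ * c) m : ℕ))) - (∑ m, a m * ζ ^ ((σ m : ℕ))))
      ≤ 2 * r := by
    have htri := norm_sub_le (∑ m, a m * ζ ^ (((σ * c) m : ℕ))) (∑ m, a m * ζ ^ ((σ m : ℕ)))
    rw [Complex.norm_eq_abs, Complex.norm_eq_abs, Complex.norm_eq_abs,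
      habs (σ * c), habs σ] at htri
    linarith
  have hDnormSq : Complex.normSq ((∑ m, a m * ζ ^ (((σ * c) m : ℕ)))
      - (∑ m, a m * ζ ^ ((σ m : ℕ)))) ≤ (2*r)^2 := by
    rw [← Complex.sq_abs]
    exact pow_le_pow_left₀ (AbsoluteValue.nonneg _ _) hDabs 2
  -- exact value of the norm
  have hρre : ρ.re = Real.cos θ := by rw [hρ]; exact Complex.exp_ofReal_mul_I_re θ
  have hρim : ρ.im = Real.sin θ := by rw [hρ]; exact Complex.exp_ofReal_mul_I_im θ
  have hre : (w * ρ).re = 1/2 * Real.cos ψ + Real.sqrt 3/2 * Real.sin ψ := by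
    rw [Complex.mul_re, hρre, hρim, hwre, hθcos]
    linarith [hθsin]
  have hnormD : Complex.normSq ((∑ m, a m * ζ ^ (((σ * c) m : ℕ)))
      - (∑ m, a m * ζ ^ ((σ m : ℕ))))
      = r^2 * ((2 - 2*Real.cos ψ) * (2 + 2*((w*ρ).re))) := by
    rw [hD2]
    have huv : u + v * ρ = u * (1 + w * ρ) := by rw [← hwu]; ring
    rw [huv, map_mul, map_mul, hnρ1]
    have hnu : Complex.normSq u = r^2 := by rw [← Complex.sq_abs, hau]
    have hnwρ : Complex.normSq (w * ρ) = 1 := by rw [map_mul, hnw, hρ, normSq_expI, mul_one]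
    rw [hnu, normSq_one_add hnwρ]
    ring
  -- the trigonometric inequality
  have hq3 : Real.sqrt 3 ^ 2 = 3 := Real.sq_sqrt (by norm_num)
  have hsc := Real.sin_sq_add_cos_sq ψ
  have hsinlb : 1/2 < Real.sin (ψ - π/6) := sin_gt_half (by linarith) (by linarith)
  have htval : Real.sin (ψ - π/6) = Real.sin ψ * (Real.sqrt 3/2) - Real.cos ψ * (1/2) := by
    rw [Real.sin_sub, Real.cos_pi_div_six, Real.sin_pi_div_six]
  have hid : (2 - 2*Real.cos ψ) * (2 + 2*(1/2 * Real.cos ψ + Real.sqrt 3/2 * Real.sin ψ))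
      = 4 * ((Real.sin ψ * (Real.sqrt 3/2) - Real.cos ψ * (1/2)) + 1/2)^2 := by
    linear_combination (-3 : ℝ) * hsc - Real.sin ψ^2 * hq3
  rw [htval] at hsinlb
  have hgt : 4 < (2 - 2*Real.cos ψ) * (2 + 2*((w*ρ).re)) := by
    rw [hre, hid]
    nlinarith
  nlinarith [mul_pos (mul_pos hrpos hrpos) (sub_pos.mpr hgt)]


set_option maxHeartbeats 1000000 in
lemma case2 {n : ℕ} (a : Fin n → ℂ) (ζ : ℂ) (hζ : IsPrimitiveRoot ζ n)
    (r : ℝ) (hrpos : 0 < r)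
    (habs : ∀ σ : Equiv.Perm (Fin n), Complex.abs (∑ m, a m * ζ ^ (σ m : ℕ)) = r)
    (hr2 : ∀ p q : Fin n, a p ≠ a q → Complex.abs (a p - a q) = r)
    {i j k l : Fin n} (hij : i ≠ j) (hik : i ≠ k) (hil : i ≠ l)
    (hjk : j ≠ k) (hjl : j ≠ l) (hkl : k ≠ l)
    (heq1 : a i = a j) (heq2 : a k = a l) (hxy : a i ≠ a k) : False := by
  have hn4 : 4 ≤ n := four_le hij hik hil hjk hjl hkl
  haveI : NeZero n := ⟨by omega⟩
  have hnpos : 0 < n := by omega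
  have hn0 : (0:ℝ) < n := by exact_mod_cast hnpos
  have hpi := Real.pi_pos
  set u' : ℕ := n / 2 with hu'
  have hu2 : 2 ≤ u' := by omega
  have hu1n : u' + 1 < n := by omega
  have h2un : 2 * u' ≤ n := by omega
  set f : ℕ → ℂ := fun m => Complex.exp ((2*π*m/n : ℝ) * Complex.I) with hf
  -- the four roots are f 0 = 1, f 1, f u', f (u'+1)
  have hne01 : f 0 ≠ f 1 := f_ne hnpos (by omega) (by omega)
  have hne0u : f 0 ≠ f u' := f_ne hnpos (by omega) (by omega)
  have hne0v : f 0 ≠ f (u'+1) := f_ne hnpos (by omega) (by omega)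
  have hne1u : f 1 ≠ f u' := f_ne hnpos (by omega) (by omega)
  have hne1v : f 1 ≠ f (u'+1) := f_ne hnpos (by omega) (by omega)
  have hneuv : f u' ≠ f (u'+1) := f_ne hnpos (by omega) (by omega)
  -- exponents
  obtain ⟨e0, he0lt, he0⟩ := hζ.eq_pow_of_pow_eq_one (f_pow_n hnpos 0)
  obtain ⟨e1, he1lt, he1⟩ := hζ.eq_pow_of_pow_eq_one (f_pow_n hnpos 1)
  obtain ⟨e2, he2lt, he2⟩ := hζ.eq_pow_of_pow_eq_one (f_pow_n hnpos u')
  obtain ⟨e3, he3lt, he3⟩ := hζ.eq_pow_of_pow_eq_one (f_pow_n hnpos (u'+1))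
  set F0 : Fin n := ⟨e0, he0lt⟩ with hF0
  set F1 : Fin n := ⟨e1, he1lt⟩ with hF1
  set F2 : Fin n := ⟨e2, he2lt⟩ with hF2
  set F3 : Fin n := ⟨e3, he3lt⟩ with hF3
  have hE0 : ζ ^ ((F0 : Fin n) : ℕ) = f 0 := he0
  have hE1 : ζ ^ ((F1 : Fin n) : ℕ) = f 1 := he1
  have hE2 : ζ ^ ((F2 : Fin n) : ℕ) = f u' := he2
  have hE3 : ζ ^ ((F3 : Fin n) : ℕ) = f (u'+1) := he3
  have hd01 : F0 ≠ F1 := fun hc => hne01 (by rw [← hE0, hc, hE1])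
  have hd02 : F0 ≠ F2 := fun hc => hne0u (by rw [← hE0, hc, hE2])
  have hd03 : F0 ≠ F3 := fun hc => hne0v (by rw [← hE0, hc, hE3])
  have hd12 : F1 ≠ F2 := fun hc => hne1u (by rw [← hE1, hc, hE2])
  have hd13 : F1 ≠ F3 := fun hc => hne1v (by rw [← hE1, hc, hE3])
  have hd23 : F2 ≠ F3 := fun hc => hneuv (by rw [← hE2, hc, hE3])
  -- the permutation sending i ↦ f 0, j ↦ f 1, k ↦ f u', l ↦ f (u'+1)
  obtain ⟨σ, hσ⟩ := exists_perm 4 ![i, j, k, l] ![F0, F1, F2, F3]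
    (inj4 hij hik hil hjk hjl hkl) (inj4 hd01 hd02 hd03 hd12 hd13 hd23)
  have hσi : σ i = F0 := by simpa using hσ 0
  have hσj : σ j = F1 := by simpa using hσ 1
  have hσk : σ k = F2 := by simpa using hσ 2
  have hσl : σ l = F3 := by simpa using hσ 3
  set c : Equiv.Perm (Fin n) := Equiv.swap i k * Equiv.swap j l with hcdef
  have hci : c i = k := by
    rw [hcdef, Equiv.Perm.mul_apply, Equiv.swap_apply_of_ne_of_ne hij hil,
      Equiv.swap_apply_left]
  have hcj : c j = l := by
    rw [hcdef, Equiv.Perm.mul_apply, Equiv.swap_apply_left,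
      Equiv.swap_apply_of_ne_of_ne (Ne.symm hil) (Ne.symm hkl)]
  have hck : c k = i := by
    rw [hcdef, Equiv.Perm.mul_apply, Equiv.swap_apply_of_ne_of_ne (Ne.symm hjk) hkl,
      Equiv.swap_apply_right]
  have hcl : c l = j := by
    rw [hcdef, Equiv.Perm.mul_apply, Equiv.swap_apply_right,
      Equiv.swap_apply_of_ne_of_ne (Ne.symm hij) hjk]
  have hfix : ∀ m, m ∉ ({i, j, k, l} : Finset (Fin n)) → c m = m := by
    intro m hm
    simp only [Finset.mem_insert, Finset.mem_singleton, not_or] at hm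
    rw [hcdef, Equiv.Perm.mul_apply, Equiv.swap_apply_of_ne_of_ne hm.2.1 hm.2.2.2,
      Equiv.swap_apply_of_ne_of_ne hm.1 hm.2.2.1]
  have hD := sum_diff a ζ σ c {i, j, k, l} hfix
  rw [Finset.sum_insert (by simp [hij, hik, hil]), Finset.sum_insert (by simp [hjk, hjl]),
    Finset.sum_pair hkl] at hD
  rw [hci, hcj, hck, hcl, hσi, hσj, hσk, hσl, hE0, hE1, hE2, hE3] at hD
  rw [show a j = a i from heq1.symm, show a l = a k from heq2.symm] at hD
  -- product formula
  have hprod : f (u'+1) = f u' * f 1 := by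
    rw [hf]
    simp only
    rw [← Complex.exp_add]
    congr 1
    push_cast
    field_simp
  have hone : f 0 = 1 := by
    rw [hf]
    simp only [Nat.cast_zero, mul_zero, zero_div, Complex.ofReal_zero, zero_mul,
      Complex.exp_zero]
  have hD2 : (∑ m, a m * ζ ^ (((σ * c) m : ℕ))) - (∑ m, a m * ζ ^ ((σ m : ℕ)))
      = (a i - a k) * ((f u' - 1) * (1 + f 1)) := by
    rw [hD, hprod, hone]; ring
  -- norm bound
  have hDabs : Complex.abs ((∑ m, a m * ζ ^ (((σ * c) m : ℕ))) - (∑ m, a m * ζ ^ ((σ m : ℕ))))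
      ≤ 2 * r := by
    have htri := norm_sub_le (∑ m, a m * ζ ^ (((σ * c) m : ℕ))) (∑ m, a m * ζ ^ ((σ m : ℕ)))
    rw [Complex.norm_eq_abs, Complex.norm_eq_abs, Complex.norm_eq_abs,
      habs (σ * c), habs σ] at htri
    linarith
  have hDnormSq : Complex.normSq ((∑ m, a m * ζ ^ (((σ * c) m : ℕ)))
      - (∑ m, a m * ζ ^ ((σ m : ℕ)))) ≤ (2*r)^2 := by
    rw [← Complex.sq_abs]
    exact pow_le_pow_left₀ (AbsoluteValue.nonneg _ _) hDabs 2
  -- exact norm value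
  set A : ℝ := 2*π*u'/n with hA
  set B : ℝ := 2*π*1/n with hB
  have hnormD : Complex.normSq ((∑ m, a m * ζ ^ (((σ * c) m : ℕ)))
      - (∑ m, a m * ζ ^ ((σ m : ℕ))))
      = r^2 * ((2 - 2*Real.cos A) * (2 + 2*Real.cos B)) := by
    rw [hD2, map_mul, map_mul]
    have h1 : Complex.normSq (a i - a k) = r^2 := by
      rw [← Complex.sq_abs, hr2 _ _ hxy]
    have h2 : Complex.normSq (f u' - 1) = 2 - 2*Real.cos A := by
      rw [hf]; exact normSq_expI_sub_one A
    have h3 : Complex.normSq (1 + f 1) = 2 + 2*Real.cos B := by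
      have hcast : (2*π*((1:ℕ):ℝ)/n) = B := by rw [hB]; norm_num
      have hn1 : Complex.normSq (f 1) = 1 := by
        rw [hf]; simp only; rw [hcast]; exact normSq_expI B
      rw [normSq_one_add hn1, hf]
      simp only
      rw [hcast, Complex.exp_ofReal_mul_I_re]
    rw [h1, h2, h3]
  -- the trigonometric bound
  have hbound : 4 < (2 - 2*Real.cos A) * (2 + 2*Real.cos B) := by
    have hBle : B ≤ π/2 := by
      rw [hB, div_le_iff₀ hn0]
      have : (4:ℝ) ≤ n := by exact_mod_cast hn4
      nlinarith
    have hB0 : 0 ≤ B := by positivity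
    have hcosB : 0 ≤ Real.cos B := Real.cos_nonneg_of_mem_Icc ⟨by linarith, hBle⟩
    rcases Nat.even_or_odd n with ⟨m, hm⟩ | ⟨m, hm⟩
    · -- n even : A = π
      have hmu : u' = m := by omega
      have hAeq : A = π := by
        rw [hA, hmu]
        have hmr : (n:ℝ) = 2*m := by exact_mod_cast (by omega : n = 2*m)
        rw [hmr]
        have hm0 : (0:ℝ) < m := by
          have : 2 ≤ m := by omega
          exact_mod_cast (by omega : 0 < m)
        field_simp
      rw [hAeq, Real.cos_pi]
      nlinarith
    · -- n odd : A = π - π/n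
      have hmu : u' = m := by omega
      have hm2 : 2 ≤ m := by omega
      have hAeq : A = π - π/n := by
        rw [hA, hmu]
        have hmr : (n:ℝ) = 2*m+1 := by exact_mod_cast (by omega : n = 2*m+1)
        rw [hmr]
        have hm0 : (0:ℝ) < 2*(m:ℝ)+1 := by positivity
        field_simp
        ring
      have hBeq : B = 2*(π/n) := by rw [hB]; ring
      have hcosA : Real.cos A = -Real.cos (π/n) := by rw [hAeq, Real.cos_pi_sub]
      have hcosB2 : Real.cos B = 2*Real.cos (π/n)^2 - 1 := by
        rw [hBeq, Real.cos_two_mul]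
      have hn5 : (5:ℝ) ≤ n := by exact_mod_cast (by omega : 5 ≤ n)
      have hπn : π/n < π/4 := by
        rw [div_lt_div_iff₀ hn0 (by norm_num)]
        nlinarith
      have hπn0 : 0 < π/n := by positivity
      have hcoslt : Real.cos (π/4) < Real.cos (π/n) := by
        apply Real.strictAntiOn_cos ⟨by linarith, by linarith⟩
          ⟨by linarith, by linarith⟩ hπn
      rw [Real.cos_pi_div_four] at hcoslt
      have hsq2 : Real.sqrt 2^2 = 2 := Real.sq_sqrt (by norm_num)
      have hsqrt2pos : 0 < Real.sqrt 2 := Real.sqrt_pos.mpr (by norm_num)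
      rw [hcosA, hcosB2]
      nlinarith [hcoslt, hsq2, hsqrt2pos]
  nlinarith [hDnormSq, hnormD, hbound, mul_pos (mul_pos hrpos hrpos) (sub_pos.mpr hbound)]



set_option maxHeartbeats 1000000 in
theorem main_engine {n : ℕ} (hn : 1 ≤ n) (a : Fin n → ℂ) (α : ℂ) (hα : α ≠ 0)
    (ζ : ℂ) (hζ : IsPrimitiveRoot ζ n)
    (h : ∀ σ : Equiv.Perm (Fin n), (∑ i, a i * ζ ^ (σ i : ℕ)) ^ n = α) :
    ∃ i : Fin n, ∃ c : ℂ, ∀ j, j ≠ i → a j = c := by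
  by_contra hcon
  push_neg at hcon
  haveI : NeZero n := ⟨by omega⟩
  -- there exist two unequal coefficients
  obtain ⟨p, q, hpq⟩ : ∃ p q : Fin n, a p ≠ a q := by
    by_contra hall
    push_neg at hall
    obtain ⟨j, _, hjv⟩ := hcon ⟨0, by omega⟩ (a ⟨0, by omega⟩)
    exact hjv (hall j ⟨0, by omega⟩)
  have hpqi : p ≠ q := fun hc => hpq (by rw [hc])
  have hn2 : 2 ≤ n := by
    by_contra h2
    exact hpqi (Fin.ext (by omega))
  -- the common modulus r
  set r : ℝ := Complex.abs (∑ i, a i * ζ ^ (((1 : Equiv.Perm (Fin n)) i : ℕ))) with hrdef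
  have habs : ∀ σ : Equiv.Perm (Fin n), Complex.abs (∑ i, a i * ζ ^ (σ i : ℕ)) = r := by
    intro σ
    have h1 : (Complex.abs (∑ i, a i * ζ ^ (σ i : ℕ))) ^ n
        = (Complex.abs (∑ i, a i * ζ ^ (((1 : Equiv.Perm (Fin n)) i : ℕ)))) ^ n := by
      rw [← map_pow, ← map_pow, h σ, h 1]
    exact (pow_left_inj₀ (AbsoluteValue.nonneg _ _) (AbsoluteValue.nonneg _ _)
      (by omega : n ≠ 0)).mp h1
  have hS0 : ∀ σ : Equiv.Perm (Fin n), (∑ i, a i * ζ ^ (σ i : ℕ)) ≠ 0 := by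
    intro σ hz
    exact hα (by rw [← h σ, hz, zero_pow (by omega : n ≠ 0)])
  have hrpos : 0 < r := by
    rcases lt_or_eq_of_le (AbsoluteValue.nonneg Complex.abs
      (∑ i, a i * ζ ^ (((1 : Equiv.Perm (Fin n)) i : ℕ)))) with hlt | heq
    · rwa [hrdef]
    · exact absurd ((map_eq_zero _).mp heq.symm) (hS0 1)
  have hr2 : ∀ p q : Fin n, a p ≠ a q → Complex.abs (a p - a q) = r :=
    fun p q hv => step2 hn2 a ζ hζ α hα h r habs hv
  -- case analysis
  obtain ⟨j0, hj0p, hj0v⟩ := hcon p (a q)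
  have hj0q : j0 ≠ q := fun hc => hj0v (by rw [hc])
  by_cases hcase : a j0 ≠ a p
  · -- three pairwise distinct values : p, q, j0
    exact case1 a ζ hζ r hrpos habs hr2 hpqi (Ne.symm hj0p) (Ne.symm hj0q)
      hpq (Ne.symm hcase) (fun hc => hj0v hc.symm)
  · push_neg at hcase
    obtain ⟨l0, hl0q, hl0v⟩ := hcon q (a p)
    have hl0p : l0 ≠ p := fun hc => hl0v (by rw [hc])
    by_cases hcase2 : a l0 ≠ a q
    · -- three pairwise distinct values : p, q, l0
      exact case1 a ζ hζ r hrpos habs hr2 hpqi (Ne.symm hl0p) (Ne.symm hl0q)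
        hpq (fun hc => hl0v hc.symm) (fun hc => hcase2 hc.symm)
    · push_neg at hcase2
      -- two pairs : a p = a j0 and a q = a l0, with a p ≠ a q
      have hpj0 : p ≠ j0 := Ne.symm hj0p
      have hpl0 : p ≠ l0 := fun hc => hpq (by rw [hc, hcase2])
      have hj0q' : j0 ≠ q := hj0q
      have hj0l0 : j0 ≠ l0 := fun hc => hpq (by rw [← hcase, hc, hcase2])
      have hql0 : q ≠ l0 := Ne.symm hl0q
      exact case2 a ζ hζ r hrpos habs hr2 hpj0 hpqi hpl0 hj0q' hj0l0 hql0
        hcase.symm hcase2.symm hpq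

end Stmt8Aux

/-- if `f = Σ aᵢ xᵢ` is a linear form on `ℂ^n` and `α ≠ 0` with `f(v)^n = α`
for every `v` whose coordinates are a permutation of the `n` distinct `n`-th roots of unity,
then at least `n-1` of the coefficients `aᵢ` are equal (i.e. `f ∈ ℂ xᵢ + ℂ(x_1+...+x_n)`). -/
theorem stmt8 (n : ℕ) (hn : 1 ≤ n) (a : Fin n → ℂ) (α : ℂ) (hα : α ≠ 0)
    (ζ : ℂ) (hζ : IsPrimitiveRoot ζ n)
    (h : ∀ σ : Equiv.Perm (Fin n), (∑ i, a i * ζ ^ (σ i : ℕ)) ^ n = α) :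
    ∃ i : Fin n, ∃ c : ℂ, ∀ j, j ≠ i → a j = c :=
  Stmt8Aux.main_engine hn a α hα ζ hζ h
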